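/- (von Staudt–Clausen theorem with level 2) For every integer n ≥ 1, the rational number 𝔅_{2n} + Σ_{p} (−1)^{n − (p−1)/2} / p is an integer, where the sum runs over all odd primes p such that p − 1 divides 2n, and 𝔅_{2n} = 𝔅_{2n}^{(1)} is the Bernoulli number with level 2. -/

import Mathlib

/-- Stirling numbers of the second kind with level `s`. -/
def stirling2Lev (s : ℕ) : ℕ → ℕ → ℕ
  | 0, 0 => 1
  | 0, _ + 1 => 0
  | _ + 1, 0 => 0
  | n + 1, k + 1 => stirling2Lev s n k + (k + 1) ^ s * stirling2Lev s n (k + 1)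

/-- Poly-Bernoulli numbers with level `2`. -/
def polyBernoulliLev2 (n : ℕ) (k : ℤ) : ℚ :=
  ∑ m ∈ Finset.range (n + 1),
    (stirling2Lev 2 n m : ℚ) * (-1) ^ (n - m) * (Nat.factorial (2 * m) : ℚ)
      / ((2 * m + 1 : ℚ)) ^ k

open Finset

lemma choose_key (k s : ℕ) :
    (2*(k+1)).choose (s+1) * ((s+1) * (2*(k+1) - (s+1))) = (2*(k+1))*(2*(k+1)-1) * ((2*k).choose s) := by
  have h1 : (2*k+2) * Nat.choose (2*k+1) s = Nat.choose (2*k+2) (s+1) * (s+1) :=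
    Nat.add_one_mul_choose_eq (2*k+1) s
  have h2 : Nat.choose (2*k+1) (s+1) * (s+1) = Nat.choose (2*k+1) s * (2*k+1-s) :=
    Nat.choose_succ_right_eq (2*k+1) s
  have h3 : (2*k+1) * Nat.choose (2*k) s = Nat.choose (2*k+1) (s+1) * (s+1) :=
    Nat.add_one_mul_choose_eq (2*k) s
  have e2 : 2*(k+1) - (s+1) = 2*k+1-s := by omega
  have e3 : 2*(k+1)-1 = 2*k+1 := by omega
  have e1 : 2*(k+1) = 2*k+2 := by ring
  rw [e2, e3, e1]
  calc Nat.choose (2*k+2) (s+1) * ((s+1) * (2*k+1-s))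
      = ((2*k+2) * Nat.choose (2*k+1) s) * (2*k+1-s) := by rw [h1]; ring
    _ = (2*k+2) * (Nat.choose (2*k+1) s * (2*k+1-s)) := by ring
    _ = (2*k+2) * ((2*k+1) * Nat.choose (2*k) s) := by rw [← h2, ← h3]
    _ = _ := by ring

lemma stirling_formula (n : ℕ) : ∀ m : ℕ,
    ((2*m).factorial : ℤ) * stirling2Lev 2 n m
      = ∑ r ∈ Finset.range (2*m+1), (-1)^r * ((2*m).choose r : ℤ) * (((m:ℤ) - r)^2)^n := by
  induction n with
  | zero =>
    intro m
    have h := Int.alternating_sum_range_choose (n := 2*m)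
    have h2 : ∑ r ∈ Finset.range (2*m+1), (-1:ℤ)^r * ((2*m).choose r : ℤ) * (((m:ℤ) - r)^2)^0
        = if 2*m = 0 then 1 else 0 := by
      rw [← h]; exact Finset.sum_congr rfl fun r _ => by rw [pow_zero, mul_one]
    rw [h2]
    match m with
    | 0 => simp [stirling2Lev]
    | m+1 => simp [stirling2Lev]
  | succ n ih =>
    intro m
    match m with
    | 0 => simp [stirling2Lev]
    | k+1 =>
      set M := k + 1 with hM
      have hrec : (stirling2Lev 2 (n+1) M : ℤ) = stirling2Lev 2 n k + (M:ℤ)^2 * stirling2Lev 2 n M := by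
        show ((stirling2Lev 2 n k + (k+1)^2 * stirling2Lev 2 n (k+1) : ℕ) : ℤ) = _
        push_cast [hM]; ring
      have hfac : ((2*M).factorial : ℤ) = 2*(M:ℤ) * (2*(M:ℤ)-1) * ((2*k).factorial) := by
        have h2M : 2*M = (2*k+1)+1 := by omega
        rw [h2M, Nat.factorial_succ, Nat.factorial_succ]
        push_cast [hM]; ring
      have lhs_eq : ((2*M).factorial : ℤ) * stirling2Lev 2 (n+1) M
          = 2*(M:ℤ)*(2*(M:ℤ)-1) * (((2*k).factorial : ℤ) * stirling2Lev 2 n k)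
            + (M:ℤ)^2 * (((2*M).factorial : ℤ) * stirling2Lev 2 n M) := by
        rw [hrec, hfac]; ring
      rw [lhs_eq, ih k, ih M]
      have key_pt : ∀ r ∈ Finset.range (2*M+1),
          (-1:ℤ)^r * ((2*M).choose r : ℤ) * (((M:ℤ) - r)^2)^(n+1)
          = (M:ℤ)^2 * ((-1)^r * ((2*M).choose r : ℤ) * (((M:ℤ) - r)^2)^n)
            - 2*(M:ℤ)*(2*(M:ℤ)-1) *
              ((-1)^r * (if r = 0 then 0 else ((2*k).choose (r-1) : ℤ)) * (((M:ℤ) - r)^2)^n) := by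
        intro r hr
        rw [Finset.mem_range] at hr
        have hr' : r ≤ 2*M := by omega
        have hch : ((2*M).choose r : ℤ) * ((M:ℤ)^2 - ((M:ℤ) - r)^2)
            = 2*(M:ℤ)*(2*(M:ℤ)-1) * (if r = 0 then 0 else ((2*k).choose (r-1) : ℤ)) := by
          have hcast : ((M:ℤ)^2 - ((M:ℤ) - r)^2) = ((r * (2*M - r) : ℕ) : ℤ) := by
            push_cast [Nat.cast_sub hr']; ring
          rw [hcast]
          match r with
          | 0 => simp
          | s+1 =>
            simp only [if_neg (Nat.succ_ne_zero s), Nat.add_sub_cancel]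
            have hck := choose_key k s
            have hcsub : ((2*(k+1)-1 : ℕ) : ℤ) = 2*((k:ℤ)+1)-1 := by
              have h1 : (1:ℕ) ≤ 2*(k+1) := by omega
              push_cast [Nat.cast_sub h1]; ring
            rw [hM, ← Nat.cast_mul, hck]
            push_cast [hcsub]
            ring
        rw [pow_succ]
        linear_combination (-(-1:ℤ)^r * (((M:ℤ) - (r:ℤ))^2)^n) * hch
      rw [Finset.sum_congr rfl key_pt, Finset.sum_sub_distrib, ← Finset.mul_sum, ← Finset.mul_sum]
      have hB : ∑ r ∈ Finset.range (2*M+1),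
            ((-1:ℤ)^r * (if r = 0 then 0 else ((2*k).choose (r-1) : ℤ)) * (((M:ℤ) - r)^2)^n)
          = - ∑ s ∈ Finset.range (2*k+1), (-1:ℤ)^s * ((2*k).choose s : ℤ) * (((k:ℤ) - s)^2)^n := by
        rw [Finset.sum_range_succ']
        simp only [if_pos rfl, mul_zero, zero_mul, mul_one, add_zero]
        have hstep : ∀ i, (-1:ℤ)^(i+1) * (if i + 1 = 0 then 0 else ((2*k).choose (i+1-1) : ℤ))
              * (((M:ℤ) - (i+1:ℕ))^2)^n
            = - ((-1:ℤ)^i * ((2*k).choose i : ℤ) * (((k:ℤ) - i)^2)^n) := by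
          intro i
          have hMi : ((M:ℤ) - ((i+1:ℕ):ℤ)) = (k:ℤ) - i := by push_cast [hM]; ring
          simp only [if_neg (Nat.succ_ne_zero i), Nat.add_sub_cancel, hMi, pow_succ]
          ring
        rw [Finset.sum_congr rfl fun i _ => hstep i]
        rw [Finset.sum_neg_distrib]
        have h2M : 2*M = (2*k+1)+1 := by omega
        rw [h2M, Finset.sum_range_succ]
        simp [Nat.choose_eq_zero_of_lt (by omega : 2*k < 2*k+1)]
      rw [hB]
      ring

lemma choose_mod_p (p : ℕ) [hp : Fact p.Prime] :
    ∀ r, r ≤ p - 1 → (((p-1).choose r : ℕ) : ZMod p) = (-1)^r := by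
  intro r
  induction r with
  | zero => simp
  | succ s ih =>
    intro h
    have hp2 : 2 ≤ p := hp.out.two_le
    have hs : s ≤ p - 1 := by omega
    have hlt : s + 1 < p := by omega
    have hdvd : p ∣ p.choose (s+1) := hp.out.dvd_choose_self (Nat.succ_ne_zero s) hlt
    have hzero : ((p.choose (s+1) : ℕ) : ZMod p) = 0 :=
      (ZMod.natCast_eq_zero_iff _ _).mpr hdvd
    have hsplit : p.choose (s+1) = (p-1).choose s + (p-1).choose (s+1) := by
      have : p = (p-1)+1 := by omega
      rw [this]; exact Nat.choose_succ_succ (p-1) s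
    rw [hsplit] at hzero
    push_cast at hzero
    rw [ih hs] at hzero
    have : ((p-1).choose (s+1) : ZMod p) = -(-1)^s := by linear_combination hzero
    rw [this, pow_succ]; ring

lemma zmod_sum_pow (p : ℕ) [hp : Fact p.Prime] (i : ℕ) (hi : i ≠ 0) :
    ∑ x : ZMod p, x ^ i = if (p - 1) ∣ i then -1 else 0 := by
  classical
  have hq := FiniteField.sum_pow_units (ZMod p) i
  rw [ZMod.card] at hq
  let φ : (ZMod p)ˣ ↪ ZMod p := ⟨fun x => x, Units.val_injective⟩
  have huniv : (univ.map φ) = univ \ {0} := by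
    ext x
    simpa only [mem_map, mem_univ, Function.Embedding.coeFn_mk, true_and, mem_sdiff,
      mem_singleton, φ] using (show (∃ a : (ZMod p)ˣ, (a : ZMod p) = x) ↔ ¬ x = 0 from isUnit_iff_ne_zero)
  calc ∑ x : ZMod p, x ^ i
      = ∑ x ∈ univ \ {(0 : ZMod p)}, x ^ i := by
        rw [← sum_sdiff (Finset.subset_univ {0}), sum_singleton, zero_pow hi, add_zero]
    _ = ∑ x : (ZMod p)ˣ, (x : ZMod p) ^ i := by
        rw [← huniv, Finset.sum_map]
        exact Finset.sum_congr rfl fun x _ => rfl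
    _ = if (p - 1) ∣ i then -1 else 0 := by
        rw [← hq]

lemma key_lemma (n m : ℕ) (hn : 1 ≤ n) (hp : (2*m+1).Prime) :
    ∃ z : ℤ, ((2*m).factorial : ℤ) * stirling2Lev 2 n m + (if 2*m ∣ 2*n then 1 else 0)
      = (2*m+1) * z := by
  haveI : Fact (2*m+1).Prime := ⟨hp⟩
  set p := 2*m+1 with hpdef
  suffices h : ((((2*m).factorial : ℤ) * stirling2Lev 2 n m + (if 2*m ∣ 2*n then 1 else 0) : ℤ) : ZMod p) = 0 by
    have hd := (ZMod.intCast_zmod_eq_zero_iff_dvd _ p).mp h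
    obtain ⟨z, hz⟩ := hd
    exact ⟨z, by exact_mod_cast hz⟩
  have hG := congrArg (fun z : ℤ => (z : ZMod p)) (stirling_formula n m)
  simp only [Int.cast_mul, Int.cast_natCast, Int.cast_sum, Int.cast_pow, Int.cast_neg,
    Int.cast_one, Int.cast_sub] at hG
  -- hG : (fact) * (stirling) = ∑ r in range (2m+1), (-1)^r * (choose) * ((m - r)^2)^n  in ZMod p
  have hrange : 2*m+1 = p := rfl
  have hsum : ∑ r ∈ Finset.range (2*m+1),
        ((-1:ZMod p))^r * (((2*m).choose r : ℕ) : ZMod p) * (((m : ZMod p) - (r:ℕ))^2)^n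
      = ∑ r ∈ Finset.range (2*m+1), (((m : ZMod p) - (r:ℕ))^2)^n := by
    refine Finset.sum_congr rfl fun r hr => ?_
    rw [Finset.mem_range] at hr
    have h1 : r ≤ p - 1 := by omega
    have h2 : (2*m) = p - 1 := by omega
    rw [h2, choose_mod_p p r h1, ← mul_pow]
    norm_num
  have hbij : ∑ r ∈ Finset.range (2*m+1), (((m : ZMod p) - (r:ℕ))^2)^n
      = ∑ x : ZMod p, (x^2)^n := by
    rw [hrange]
    refine Finset.sum_nbij' (fun r => (m : ZMod p) - (r:ℕ)) (fun x => ((m : ZMod p) - x).val)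
      ?_ ?_ ?_ ?_ ?_
    · intro a _; exact Finset.mem_univ _
    · intro x _
      rw [Finset.mem_range]
      exact ZMod.val_lt _
    · intro a ha
      rw [Finset.mem_range] at ha
      show ((m : ZMod p) - ((m : ZMod p) - (a:ℕ))).val = a
      rw [sub_sub_cancel, ZMod.val_natCast_of_lt ha]
    · intro x _
      show (m : ZMod p) - ((((m : ZMod p) - x).val : ℕ) : ZMod p) = x
      rw [ZMod.natCast_val, ZMod.cast_id, sub_sub_cancel]
    · intro a _; rfl
  have hpow : ∑ x : ZMod p, (x^2)^n = ∑ x : ZMod p, x^(2*n) := by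
    refine Finset.sum_congr rfl fun x _ => ?_
    rw [← pow_mul]
  have hfin := zmod_sum_pow p (2*n) (by omega)
  have hp1 : p - 1 = 2*m := by omega
  push_cast
  rw [hG, hsum, hbij, hpow, hfin, hp1]
  split_ifs <;> ring

lemma composite_dvd (m : ℕ) (hm : 1 ≤ m) (h : ¬ (2*m+1).Prime) :
    (2*m+1) ∣ (2*m).factorial := by
  set N := 2*m+1 with hN
  have h2 : 2 ≤ N := by omega
  obtain ⟨a, ha, ha2, haN⟩ := Nat.exists_dvd_of_not_prime2 h2 h
  obtain ⟨b, hb⟩ := ha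
  have hb2 : 2 ≤ b := by
    rcases Nat.lt_or_ge b 2 with hb' | hb'
    · interval_cases b <;> omega
    · exact hb'
  have hbN : b < N := by nlinarith
  have fact_eq : (∏ x ∈ Finset.Ico 1 (2*m+1), x) = (2*m).factorial :=
    Finset.prod_Ico_id_eq_factorial (2*m)
  by_cases hab : a = b
  · -- N = a^2
    have hNa : N = a * a := by rw [hb, hab]
    have hodd : a % 2 = 1 := by
      rcases Nat.even_or_odd a with he | ho
      · exfalso
        obtain ⟨d, hd⟩ := he.mul_right a
        omega
      · obtain ⟨c, hc⟩ := ho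
        omega
    have ha3 : 3 ≤ a := by omega
    have h2a : 2*a < N := by nlinarith
    have hsub : ({a, 2*a} : Finset ℕ) ⊆ Finset.Ico 1 (2*m+1) := by
      intro x hx
      simp only [Finset.mem_insert, Finset.mem_singleton] at hx
      rw [Finset.mem_Ico]
      rcases hx with rfl | rfl <;> omega
    have hdvd : a * (2*a) ∣ (2*m).factorial := by
      rw [← fact_eq]
      refine dvd_trans ?_ (Finset.prod_dvd_prod_of_subset _ _ _ hsub)
      rw [Finset.prod_pair (by omega : a ≠ 2*a)]
    exact dvd_trans ⟨2, by rw [hNa]; ring⟩ hdvd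
  · have hsub : ({a, b} : Finset ℕ) ⊆ Finset.Ico 1 (2*m+1) := by
      intro x hx
      simp only [Finset.mem_insert, Finset.mem_singleton] at hx
      rw [Finset.mem_Ico]
      rcases hx with rfl | rfl <;> omega
    have hdvd : a * b ∣ (2*m).factorial := by
      rw [← fact_eq]
      refine dvd_trans ?_ (Finset.prod_dvd_prod_of_subset _ _ _ hsub)
      rw [Finset.prod_pair hab]
    rw [hb]
    exact hdvd

lemma term_int (n m : ℕ) (hn : 1 ≤ n) :
    ∃ z : ℤ, (stirling2Lev 2 n m : ℚ) * (-1) ^ (n - m) * ((2*m).factorial : ℚ) / (2*(m:ℚ)+1)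
      + (if (2*m+1).Prime ∧ 2*m ∣ 2*n then (-1:ℚ)^(n-m) / (2*(m:ℚ)+1) else 0) = z := by
  have hp0 : (2*(m:ℚ)+1) ≠ 0 := by positivity
  by_cases hp : (2*m+1).Prime
  · obtain ⟨z, hz⟩ := key_lemma n m hn hp
    have hzQ : ((2*m).factorial : ℚ) * (stirling2Lev 2 n m : ℚ)
        + (if 2*m ∣ 2*n then (1:ℚ) else 0) = (2*(m:ℚ)+1) * (z:ℚ) := by
      have := congrArg (fun x : ℤ => (x : ℚ)) hz
      push_cast at this
      split_ifs at this ⊢ with hd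
      · linarith
      · linarith
    have hif : (if (2*m+1).Prime ∧ 2*m ∣ 2*n then (-1:ℚ)^(n-m) / (2*(m:ℚ)+1) else 0)
        = (-1:ℚ)^(n-m) * (if 2*m ∣ 2*n then (1:ℚ) else 0) / (2*(m:ℚ)+1) := by
      by_cases hd : 2*m ∣ 2*n
      · rw [if_pos ⟨hp, hd⟩, if_pos hd, mul_one]
      · rw [if_neg (fun hc => hd hc.2), if_neg hd, mul_zero, zero_div]
    refine ⟨(-1)^(n-m) * z, ?_⟩
    rw [hif]
    push_cast
    calc (stirling2Lev 2 n m : ℚ) * (-1) ^ (n - m) * ((2*m).factorial : ℚ) / (2*(m:ℚ)+1)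
          + (-1:ℚ)^(n-m) * (if 2*m ∣ 2*n then (1:ℚ) else 0) / (2*(m:ℚ)+1)
        = (-1:ℚ)^(n-m) * ((((2*m).factorial : ℚ) * (stirling2Lev 2 n m : ℚ)
            + (if 2*m ∣ 2*n then (1:ℚ) else 0)) / (2*(m:ℚ)+1)) := by ring
      _ = (-1:ℚ)^(n-m) * ((2*(m:ℚ)+1) * (z:ℚ) / (2*(m:ℚ)+1)) := by rw [hzQ]
      _ = (-1:ℚ)^(n-m) * (z:ℚ) := by rw [mul_div_cancel_left₀ _ hp0]
  · rw [if_neg (fun hc => hp hc.1), add_zero]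
    rcases Nat.eq_zero_or_pos m with rfl | hm
    · refine ⟨(-1)^n * stirling2Lev 2 n 0, ?_⟩
      push_cast
      norm_num
      ring
    · obtain ⟨c, hc⟩ := composite_dvd m hm hp
      refine ⟨(-1)^(n-m) * stirling2Lev 2 n m * c, ?_⟩
      have hcQ : ((2*m).factorial : ℚ) = (2*(m:ℚ)+1) * c := by
        have := congrArg (fun x : ℕ => (x : ℚ)) hc
        push_cast at this
        linarith
      rw [hcQ]
      push_cast
      field_simp

lemma sum_int_of_terms {s : Finset ℕ} {f : ℕ → ℚ} (h : ∀ i ∈ s, ∃ z : ℤ, f i = z) :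
    ∃ z : ℤ, ∑ i ∈ s, f i = z := by
  classical
  induction s using Finset.induction_on with
  | empty => exact ⟨0, by simp⟩
  | insert a t hx ih =>
    obtain ⟨z1, hz1⟩ := h a (Finset.mem_insert_self a t)
    obtain ⟨z2, hz2⟩ := ih fun i hi => h i (Finset.mem_insert_of_mem hi)
    exact ⟨z1 + z2, by rw [Finset.sum_insert hx, hz1, hz2]; push_cast; ring⟩

lemma reindex (n : ℕ) (hn : 1 ≤ n) :
    ∑ p ∈ (Finset.range (2 * n + 2)).filter (fun p => p.Prime ∧ p ≠ 2 ∧ (p - 1) ∣ 2 * n),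
      (-1 : ℚ) ^ (n - (p - 1) / 2) / (p : ℚ)
    = ∑ m ∈ Finset.range (n+1),
        (if (2*m+1).Prime ∧ 2*m ∣ 2*n then (-1:ℚ)^(n-m) / (2*(m:ℚ)+1) else 0) := by
  rw [← Finset.sum_filter]
  refine Finset.sum_nbij' (fun p => (p-1)/2) (fun m => 2*m+1) ?_ ?_ ?_ ?_ ?_
  · intro p hp
    simp only [Finset.mem_filter, Finset.mem_range] at hp ⊢
    obtain ⟨hpr, hprime, hne2, hdvd⟩ := hp
    obtain ⟨t, ht⟩ := hprime.odd_of_ne_two hne2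
    have htm : (p-1)/2 = t := by omega
    have ht1 : 1 ≤ t := by
      rcases Nat.eq_zero_or_pos t with rfl | h1
      · exfalso; rw [show p = 1 by omega] at hprime; exact Nat.not_prime_one hprime
      · exact h1
    have hle : 2*t ≤ 2*n := Nat.le_of_dvd (by omega) (by rw [show 2*t = p - 1 by omega]; exact hdvd)
    refine ⟨by omega, ?_, ?_⟩
    · rw [htm, show 2*t+1 = p by omega]; exact hprime
    · rw [htm, show 2*t = p - 1 by omega]; exact hdvd
  · intro m hm
    simp only [Finset.mem_filter, Finset.mem_range] at hm ⊢
    obtain ⟨hmn, hprime, hdvd⟩ := hm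
    have hm1 : 1 ≤ m := by
      rcases Nat.eq_zero_or_pos m with rfl | h1
      · exact absurd hprime (by norm_num)
      · exact h1
    have hle : 2*m ≤ 2*n := Nat.le_of_dvd (by omega) hdvd
    exact ⟨by omega, hprime, by omega, by rw [show 2*m+1-1 = 2*m by omega]; exact hdvd⟩
  · intro p hp
    rw [Finset.mem_filter] at hp
    obtain ⟨t, ht⟩ := hp.2.1.odd_of_ne_two hp.2.2.1
    show 2*((p-1)/2)+1 = p
    omega
  · intro m _
    show (2*m+1-1)/2 = m
    omega
  · intro p hp
    rw [Finset.mem_filter] at hp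
    obtain ⟨t, ht⟩ := hp.2.1.odd_of_ne_two hp.2.2.1
    have htm : (p-1)/2 = t := by omega
    show (-1 : ℚ) ^ (n - (p - 1) / 2) / (p : ℚ)
        = (-1:ℚ)^(n-(p-1)/2) / (2*(((p-1)/2 : ℕ):ℚ)+1)
    rw [htm]
    have hcast : (p : ℚ) = 2*(t:ℚ)+1 := by
      rw [ht]; push_cast; ring
    rw [hcast]

/-- Von Staudt–Clausen theorem with level `2`: for `n ≥ 1`,
`𝔅_{2n} + Σ_p (−1)^{n−(p−1)/2}/p` is an integer, the sum running over all odd primes `p`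
with `(p − 1) ∣ 2n` (all such primes satisfy `p ≤ 2n + 1`), where `𝔅_{2n} = 𝔅_{2n}^{(1)}`. -/
theorem stmt_17 (n : ℕ) (hn : 1 ≤ n) :
    ∃ z : ℤ,
      polyBernoulliLev2 n 1 +
        ∑ p ∈ (Finset.range (2 * n + 2)).filter (fun p => p.Prime ∧ p ≠ 2 ∧ (p - 1) ∣ 2 * n),
          (-1 : ℚ) ^ (n - (p - 1) / 2) / (p : ℚ)
      = (z : ℚ) := by
  rw [reindex n hn]
  unfold polyBernoulliLev2
  rw [← Finset.sum_add_distrib]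
  refine sum_int_of_terms fun m hm => ?_
  obtain ⟨z, hz⟩ := term_int n m hn
  refine ⟨z, ?_⟩
  rw [← hz]
  norm_num [zpow_one]
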